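/- Recursive rejection sampling with draft tokens sampled without replacement recovers the target distribution: if p is a probability distribution on 𝒳 with full support, 1 ≤ K ≤ |𝒳|, and the draft kernels are the sampling-without-replacement kernels derived from p, then the output Z of recursive rejection sampling satisfies Pr{Z = z} = q(z) for every z ∈ 𝒳 and every target probability distribution q on 𝒳. -/

import Mathlib

open scoped BigOperators Classical

/-- A probability distribution on a finite alphabet. -/
def IsProbDist {X : Type*} [Fintype X] (p : X → ℝ) : Prop :=
  (∀ x, 0 ≤ p x) ∧ ∑ x, p x = 1

/-- `Norm` with a default distribution `d`, used when `f` is identically zero. -/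
noncomputable def normOr {X : Type*} [Fintype X] (d f : X → ℝ) : X → ℝ :=
  if ∀ x, f x = 0 then d else fun x => f x / ∑ x', f x'

/-- Acceptance probability `min {1, qv / pv}`, interpreted as `1` when `pv = 0`. -/
noncomputable def accProb (pv qv : ℝ) : ℝ :=
  if pv = 0 then 1 else min 1 (qv / pv)

/-- Residual distributions: `Qres K q pdraft d m` is `q^{(m+1)}` (it is fed the whole draft
tuple for convenience; it only depends on the first `m - 1` coordinates). -/
noncomputable def Qres {X : Type*} [Fintype X] (K : ℕ) (q : X → ℝ)
    (pdraft : (k : Fin K) → (Fin (k : ℕ) → X) → X → ℝ) (d : X → ℝ) :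
    ℕ → (Fin K → X) → X → ℝ
  | 0, _, t => q t
  | m + 1, x, t =>
    if hm : m < K then
      normOr d (fun s =>
        max 0 (Qres K q pdraft d m x s -
          pdraft ⟨m, hm⟩ (fun j => x (Fin.castLE hm.le j)) s)) t
    else d t

/-- Probability that the draft process produces the tuple `x` of draft tokens. -/
noncomputable def trajProb {X : Type*} [Fintype X] (K : ℕ)
    (pdraft : (k : Fin K) → (Fin (k : ℕ) → X) → X → ℝ) (x : Fin K → X) : ℝ :=
  ∏ k : Fin K, pdraft k (fun j => x (Fin.castLE k.isLt.le j)) (x k)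

/-- Conditional acceptance probability of the `m`-th draft (0-indexed), given the drafts. -/
noncomputable def thetaN {X : Type*} [Fintype X] (K : ℕ) (q : X → ℝ)
    (pdraft : (k : Fin K) → (Fin (k : ℕ) → X) → X → ℝ) (d : X → ℝ)
    (m : ℕ) (x : Fin K → X) : ℝ :=
  if hm : m < K then
    accProb (pdraft ⟨m, hm⟩ (fun j => x (Fin.castLE hm.le j)) (x ⟨m, hm⟩))
      (Qres K q pdraft d m x (x ⟨m, hm⟩))
  else 0

/-- The law of the output `Z` of recursive rejection sampling: sum over draft tuples of the
probability of the tuple times the conditional probability that the output equals `z`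
(first acceptance at round `k` outputs the `k`-th draft; if every draft is rejected the
output is drawn from the last residual distribution `q^{(K+1)}`). -/
noncomputable def rrsLaw {X : Type*} [Fintype X] (K : ℕ) (q : X → ℝ)
    (pdraft : (k : Fin K) → (Fin (k : ℕ) → X) → X → ℝ) (d : X → ℝ) (z : X) : ℝ :=
  ∑ x : Fin K → X, trajProb K pdraft x *
    ((∑ k : Fin K,
        (∏ j ∈ Finset.range (k : ℕ), (1 - thetaN K q pdraft d j x)) *
          thetaN K q pdraft d (k : ℕ) x * (if x k = z then 1 else 0)) +
      (∏ j ∈ Finset.range K, (1 - thetaN K q pdraft d j x)) *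
        Qres K q pdraft d K x z)


section Helpers
variable {X : Type*} [Fintype X]

lemma isProbDist_normOr {d : X → ℝ} (hd : IsProbDist d) (f : X → ℝ)
    (hf : ∀ x, 0 ≤ f x) : IsProbDist (normOr d f) := by
  unfold normOr
  by_cases h : ∀ x, f x = 0
  · simpa [h] using hd
  · simp only [h, if_false]
    have hS : 0 < ∑ x', f x' := by
      push_neg at h
      obtain ⟨x0, hx0⟩ := h
      exact Finset.sum_pos' (fun i _ => hf i) ⟨x0, Finset.mem_univ _, lt_of_le_of_ne (hf x0) (Ne.symm hx0)⟩
    refine ⟨fun x => div_nonneg (hf x) hS.le, ?_⟩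
    rw [← Finset.sum_div, div_self hS.ne']

lemma isProbDist_Qres (K : ℕ) (q : X → ℝ) (hq : IsProbDist q)
    (pdraft : (k : Fin K) → (Fin (k : ℕ) → X) → X → ℝ) (d : X → ℝ) (hd : IsProbDist d) :
    ∀ m x, IsProbDist (Qres K q pdraft d m x) := by
  intro m
  induction m with
  | zero => intro x; exact hq
  | succ m ih =>
    intro x
    by_cases hm : m < K
    · have : Qres K q pdraft d (m+1) x = normOr d (fun s =>
        max 0 (Qres K q pdraft d m x s -
          pdraft ⟨m, hm⟩ (fun j => x (Fin.castLE hm.le j)) s)) := by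
        funext t; simp [Qres, hm]
      rw [this]
      exact isProbDist_normOr hd _ (fun x => le_max_left _ _)
    · have : Qres K q pdraft d (m+1) x = d := by
        funext t; simp [Qres, hm]
      rw [this]; exact hd

lemma accProb_key {pv qv : ℝ} (hp : 0 ≤ pv) (hq : 0 ≤ qv) :
    pv * accProb pv qv = min pv qv := by
  unfold accProb
  by_cases h : pv = 0
  · simp [h, min_eq_left hq]
  · have hpv : 0 < pv := lt_of_le_of_ne hp (Ne.symm h)
    simp only [h, if_false]
    rcases le_or_gt qv pv with hle | hlt
    · rw [min_eq_right ((div_le_one hpv).mpr hle), min_eq_right hle]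
      field_simp
    · rw [min_eq_left (le_of_lt ((one_lt_div hpv).mpr hlt)), min_eq_left hlt.le]
      ring

end Helpers
section Round
variable {X : Type*} [Fintype X]

lemma min_eq_sub_max (a b : ℝ) : min a b = b - max 0 (b - a) := by
  rcases le_total b a with h | h
  · rw [min_eq_right h, max_eq_left (by linarith)]; ring
  · rw [min_eq_left h, max_eq_right (by linarith)]; ring

lemma round_identity (P Q d : X → ℝ) (hP : IsProbDist P) (hQ : IsProbDist Q)
    (z : X) :
    (∑ t, P t * (accProb (P t) (Q t) * (if t = z then 1 else 0)
      + (1 - accProb (P t) (Q t)) * normOr d (fun s => max 0 (Q s - P s)) z)) = Q z := by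
  set R := normOr d (fun s => max 0 (Q s - P s)) z with hR
  have key : ∀ t, P t * (accProb (P t) (Q t) * (if t = z then 1 else 0)
      + (1 - accProb (P t) (Q t)) * R)
      = min (P t) (Q t) * (if t = z then 1 else 0) + (P t - min (P t) (Q t)) * R := by
    intro t
    have := accProb_key (hP.1 t) (hQ.1 t)
    calc P t * (accProb (P t) (Q t) * (if t = z then 1 else 0)
        + (1 - accProb (P t) (Q t)) * R)
        = (P t * accProb (P t) (Q t)) * (if t = z then 1 else 0)
          + (P t - P t * accProb (P t) (Q t)) * R := by ring
      _ = _ := by rw [this]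
  rw [Finset.sum_congr rfl (fun t _ => key t), Finset.sum_add_distrib]
  have h1 : (∑ t, min (P t) (Q t) * (if t = z then 1 else 0)) = min (P z) (Q z) := by
    simp [mul_ite, Finset.sum_ite_eq']
  have h2 : (∑ t, (P t - min (P t) (Q t)) * R) = (∑ t, max 0 (Q t - P t)) * R := by
    rw [← Finset.sum_mul]
    congr 1
    have step : ∀ t, P t - min (P t) (Q t) = max 0 (Q t - P t) + (P t - Q t) := by
      intro t; rw [min_eq_sub_max]; ring
    rw [Finset.sum_congr rfl (fun t _ => step t), Finset.sum_add_distrib,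
      Finset.sum_sub_distrib, hP.2, hQ.2]
    ring
  rw [h1, h2]
  set S := ∑ t, max 0 (Q t - P t) with hS
  by_cases hS0 : S = 0
  · have hsum : (∑ t, max 0 (Q t - P t)) = 0 := by rw [← hS]; exact hS0
    have hall : ∀ t, max 0 (Q t - P t) = 0 := fun t =>
      (Finset.sum_eq_zero_iff_of_nonneg
        (fun i _ => le_max_left 0 (Q i - P i))).mp hsum t (Finset.mem_univ t)
    have hQP : Q z ≤ P z := by
      have := hall z
      by_contra hc
      push_neg at hc
      rw [max_eq_right (by linarith)] at this
      linarith
    rw [hS0, min_eq_right hQP]; ring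
  · have hnz : ¬ ∀ s, max 0 (Q s - P s) = 0 := by
      intro hc
      exact hS0 (by rw [hS]; exact Finset.sum_eq_zero (fun i _ => hc i))
    have hRval : R = max 0 (Q z - P z) / S := by
      rw [hR, normOr, if_neg hnz]
    rw [hRval, min_eq_sub_max]
    field_simp
    ring
end Round
section SWOR
variable {X : Type*} [Fintype X]

lemma swor_isProbDist (p : X → ℝ) (hp : IsProbDist p) (hppos : ∀ x, 0 < p x)
    {m : ℕ} (hm : m < Fintype.card X) (h : Fin m → X) (hinj : Function.Injective h) :
    IsProbDist (fun x => (if ∃ j, h j = x then 0 else p x) / (1 - ∑ j, p (h j))) := by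
  classical
  set img := Finset.univ.image h with himgdef
  have hmem : ∀ x, (∃ j, h j = x) ↔ x ∈ img := by
    intro x; simp [himgdef]
  have hsum_img : ∑ j, p (h j) = ∑ x ∈ img, p x := by
    rw [himgdef, Finset.sum_image (fun a _ b _ hab => hinj hab)]
  have hcard : img.card = m := by
    rw [himgdef, Finset.card_image_of_injective _ hinj, Finset.card_univ, Fintype.card_fin]
  have hex : ∃ i, i ∉ img := by
    by_contra hc
    push_neg at hc
    have : Finset.univ ⊆ img := fun i _ => hc i
    have := Finset.card_le_card this
    rw [hcard, Finset.card_univ] at this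
    omega
  obtain ⟨i0, hi0⟩ := hex
  have hlt : ∑ x ∈ img, p x < 1 := by
    have h1 : ∑ x ∈ img, p x < ∑ x, p x :=
      Finset.sum_lt_sum_of_subset (Finset.subset_univ _) (Finset.mem_univ i0) hi0
        (hppos i0) (fun j _ _ => (hppos j).le)
    rw [hp.2] at h1
    exact h1
  have hD : 0 < 1 - ∑ j, p (h j) := by rw [hsum_img]; linarith
  constructor
  · intro x
    by_cases hx : ∃ j, h j = x
    · simp [hx]
    · simp only [hx, if_false]
      exact div_nonneg (hp.1 x) hD.le
  · rw [← Finset.sum_div]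
    have hnum : (∑ x, if ∃ j, h j = x then 0 else p x) = 1 - ∑ j, p (h j) := by
      have : ∀ x, (if ∃ j, h j = x then (0:ℝ) else p x)
          = p x - (if x ∈ img then p x else 0) := by
        intro x
        by_cases hx : ∃ j, h j = x
        · rw [if_pos hx, if_pos ((hmem x).mp hx)]; ring
        · rw [if_neg hx, if_neg (fun hc => hx ((hmem x).mpr hc))]; ring
      rw [Finset.sum_congr rfl (fun x _ => this x), Finset.sum_sub_distrib, hp.2,
        Finset.sum_ite_mem, Finset.univ_inter, hsum_img]
    rw [hnum, div_self hD.ne']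

end SWOR

/-- Conditional output law from round `m` onward, given the drafts. -/
noncomputable def Bfun {X : Type*} [Fintype X] (K : ℕ) (q : X → ℝ)
    (pdraft : (k : Fin K) → (Fin (k : ℕ) → X) → X → ℝ) (d : X → ℝ) (z : X)
    (m : ℕ) (x : Fin K → X) : ℝ :=
  if hm : m < K then
    thetaN K q pdraft d m x * (if x ⟨m, hm⟩ = z then 1 else 0)
      + (1 - thetaN K q pdraft d m x) * Bfun K q pdraft d z (m+1) x
  else Qres K q pdraft d K x z
termination_by K - m
decreasing_by omega

/-- Probability weight of the draft rounds `≥ m`. -/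
noncomputable def Wfun {X : Type*} [Fintype X] (K : ℕ)
    (pdraft : (k : Fin K) → (Fin (k : ℕ) → X) → X → ℝ) (m : ℕ) (x : Fin K → X) : ℝ :=
  ∏ k : Fin K, if m ≤ (k : ℕ) then pdraft k (fun j => x (Fin.castLE k.isLt.le j)) (x k) else 1

/-- Tuples agreeing with `x` on the first `m` coordinates. -/
noncomputable def pinSet {X : Type*} [Fintype X] (K m : ℕ) (x : Fin K → X) :
    Finset (Fin K → X) :=
  Finset.univ.filter (fun y => ∀ i : Fin K, (i : ℕ) < m → y i = x i)

section Congr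
variable {X : Type*} [Fintype X]

lemma Qres_congr (K : ℕ) (q : X → ℝ)
    (pdraft : (k : Fin K) → (Fin (k : ℕ) → X) → X → ℝ) (d : X → ℝ) :
    ∀ (m : ℕ) (x x' : Fin K → X), (∀ i : Fin K, (i : ℕ) < m → x i = x' i) →
      Qres K q pdraft d m x = Qres K q pdraft d m x' := by
  intro m
  induction m with
  | zero => intro x x' _; rfl
  | succ m ih =>
    intro x x' hagree
    funext t
    simp only [Qres]
    by_cases hm : m < K
    · rw [dif_pos hm, dif_pos hm]
      have h1 : Qres K q pdraft d m x = Qres K q pdraft d m x' :=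
        ih x x' (fun i hi => hagree i (by omega))
      have h2 : (fun j : Fin m => x (Fin.castLE hm.le j))
          = (fun j : Fin m => x' (Fin.castLE hm.le j)) := by
        funext j
        exact hagree (Fin.castLE hm.le j) (by simpa using (by omega : (j : ℕ) < m + 1))
      rw [h1, h2]
    · rw [dif_neg hm, dif_neg hm]
end Congr
section Struct
variable {X : Type*} [Fintype X]

/-- Injectivity of the first `m` coordinates. -/
def PrefInj {K : ℕ} (m : ℕ) (x : Fin K → X) : Prop :=
  ∀ i1 i2 : Fin K, (i1 : ℕ) < m → (i2 : ℕ) < m → x i1 = x i2 → i1 = i2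

lemma prefInj_zero {K : ℕ} (x : Fin K → X) : PrefInj 0 x := by
  intro i1 i2 h1 _ _; omega

lemma prefInj_inj {K m : ℕ} (hm : m < K) {x : Fin K → X} (h : PrefInj m x) :
    Function.Injective (fun j : Fin m => x (Fin.castLE hm.le j)) := by
  intro j1 j2 heq
  have := h (Fin.castLE hm.le j1) (Fin.castLE hm.le j2) (by simpa using j1.isLt)
    (by simpa using j2.isLt) heq
  exact Fin.castLE_injective hm.le this

lemma prefInj_update {K m : ℕ} (hm : m < K) {x : Fin K → X} (h : PrefInj m x)
    {t : X} (ht : ∀ i : Fin K, (i : ℕ) < m → x i ≠ t) :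
    PrefInj (m + 1) (Function.update x ⟨m, hm⟩ t) := by
  intro i1 i2 h1 h2 heq
  have hval : ∀ i : Fin K, (i : ℕ) < m + 1 →
      Function.update x ⟨m, hm⟩ t i = if (i : ℕ) = m then t else x i := by
    intro i hi
    by_cases hcm : (i : ℕ) = m
    · have : i = ⟨m, hm⟩ := Fin.ext hcm
      rw [this, Function.update_self, if_pos (by simpa using hcm)]
    · rw [Function.update_of_ne (fun hc => hcm (by rw [hc])), if_neg hcm]
  rw [hval i1 h1, hval i2 h2] at heq
  by_cases c1 : (i1 : ℕ) = m <;> by_cases c2 : (i2 : ℕ) = m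
  · exact Fin.ext (by omega)
  · rw [if_pos c1, if_neg c2] at heq
    exact absurd heq.symm (ht i2 (by omega))
  · rw [if_neg c1, if_pos c2] at heq
    exact absurd heq (ht i1 (by omega))
  · rw [if_neg c1, if_neg c2] at heq
    exact h i1 i2 (by omega) (by omega) heq

lemma pinSet_zero (K : ℕ) (x : Fin K → X) : pinSet K 0 x = Finset.univ := by
  ext y; simp [pinSet]

lemma pinSet_top (K : ℕ) (x : Fin K → X) : pinSet K K x = {x} := by
  ext y
  simp only [pinSet, Finset.mem_filter, Finset.mem_univ, true_and, Finset.mem_singleton]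
  constructor
  · intro h; funext i; exact h i i.isLt
  · intro h i _; rw [h]

lemma pinSet_fiber {K m : ℕ} (hm : m < K) (x : Fin K → X) (t : X) :
    Finset.filter (fun y => y ⟨m, hm⟩ = t) (pinSet K m x)
      = pinSet K (m + 1) (Function.update x ⟨m, hm⟩ t) := by
  ext y
  simp only [pinSet, Finset.mem_filter, Finset.mem_univ, true_and]
  constructor
  · rintro ⟨hagree, hym⟩ i hi
    by_cases hcm : (i : ℕ) = m
    · have : i = ⟨m, hm⟩ := Fin.ext hcm
      rw [this, Function.update_self]; exact hym
    · rw [Function.update_of_ne (fun hc => hcm (by rw [hc]))]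
      exact hagree i (by omega)
  · intro hagree
    constructor
    · intro i hi
      have := hagree i (by omega)
      rwa [Function.update_of_ne (fun hc => (by omega : (i:ℕ) ≠ m) (by rw [hc]))] at this
    · have := hagree ⟨m, hm⟩ (by simp)
      rwa [Function.update_self] at this

lemma Wfun_top (K : ℕ) (pdraft : (k : Fin K) → (Fin (k : ℕ) → X) → X → ℝ)
    (x : Fin K → X) : Wfun K pdraft K x = 1 := by
  unfold Wfun
  apply Finset.prod_eq_one
  intro k _
  rw [if_neg (by omega : ¬ K ≤ (k : ℕ))]

lemma Wfun_zero (K : ℕ) (pdraft : (k : Fin K) → (Fin (k : ℕ) → X) → X → ℝ)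
    (x : Fin K → X) : Wfun K pdraft 0 x = trajProb K pdraft x := by
  unfold Wfun trajProb
  exact Finset.prod_congr rfl (fun k _ => by rw [if_pos (Nat.zero_le _)])

lemma Wfun_step {K m : ℕ} (hm : m < K)
    (pdraft : (k : Fin K) → (Fin (k : ℕ) → X) → X → ℝ) (y : Fin K → X) :
    Wfun K pdraft m y
      = pdraft ⟨m, hm⟩ (fun j => y (Fin.castLE hm.le j)) (y ⟨m, hm⟩)
        * Wfun K pdraft (m + 1) y := by
  unfold Wfun
  rw [Finset.prod_eq_mul_prod_sdiff_singleton_of_mem (Finset.mem_univ (⟨m, hm⟩ : Fin K)),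
    Finset.prod_eq_mul_prod_sdiff_singleton_of_mem (Finset.mem_univ (⟨m, hm⟩ : Fin K))]
  rw [if_pos (le_refl m), if_neg (by omega : ¬ m + 1 ≤ m), one_mul]
  have hfac : (fun j : Fin ((⟨m, hm⟩ : Fin K) : ℕ) =>
      y (Fin.castLE (⟨m, hm⟩ : Fin K).isLt.le j)) = fun j : Fin m => y (Fin.castLE hm.le j) :=
    rfl
  congr 1
  apply Finset.prod_congr rfl
  intro k hk
  have hkm : (k : ℕ) ≠ m := by
    intro hc
    simp only [Finset.mem_sdiff, Finset.mem_singleton] at hk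
    exact hk.2 (Fin.ext hc)
  by_cases hle : m ≤ (k : ℕ)
  · rw [if_pos hle, if_pos (by omega)]
  · rw [if_neg hle, if_neg (by omega)]

lemma Bfun_step {K : ℕ} (q : X → ℝ) (pdraft : (k : Fin K) → (Fin (k : ℕ) → X) → X → ℝ)
    (d : X → ℝ) (z : X) {m : ℕ} (hm : m < K) (x : Fin K → X) :
    Bfun K q pdraft d z m x
      = thetaN K q pdraft d m x * (if x ⟨m, hm⟩ = z then 1 else 0)
        + (1 - thetaN K q pdraft d m x) * Bfun K q pdraft d z (m+1) x := by
  rw [Bfun, dif_pos hm]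

lemma Bfun_top {K : ℕ} (q : X → ℝ) (pdraft : (k : Fin K) → (Fin (k : ℕ) → X) → X → ℝ)
    (d : X → ℝ) (z : X) (x : Fin K → X) :
    Bfun K q pdraft d z K x = Qres K q pdraft d K x z := by
  rw [Bfun, dif_neg (lt_irrefl K)]

end Struct
section Main
variable {X : Type*} [Fintype X] (p : X → ℝ) (hp : IsProbDist p) (hppos : ∀ x, 0 < p x)
  (K : ℕ) (hK2 : K ≤ Fintype.card X)
  (pdraft : (k : Fin K) → (Fin (k : ℕ) → X) → X → ℝ)
  (hker : ∀ (k : Fin K) (h : Fin (k : ℕ) → X), Function.Injective h →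
      ∀ x, pdraft k h x = (if ∃ j, h j = x then 0 else p x) / (1 - ∑ j, p (h j)))

include hp hppos hK2 hker in
lemma pdraft_probDist {m : ℕ} (hm : m < K) {x : Fin K → X} (hx : PrefInj m x) :
    IsProbDist (pdraft ⟨m, hm⟩ (fun j => x (Fin.castLE hm.le j))) := by
  have hinj := prefInj_inj hm hx
  have heq : ∀ t, pdraft ⟨m, hm⟩ (fun j => x (Fin.castLE hm.le j)) t
      = (if ∃ j, x (Fin.castLE hm.le j) = t then 0 else p t)
        / (1 - ∑ j, p (x (Fin.castLE hm.le j))) :=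
    hker ⟨m, hm⟩ (fun j => x (Fin.castLE hm.le j)) hinj
  have hres := swor_isProbDist p hp hppos (hm.trans_le hK2)
    (fun j : Fin m => x (Fin.castLE hm.le j)) hinj
  rw [show pdraft ⟨m, hm⟩ (fun j => x (Fin.castLE hm.le j))
      = fun t => (if ∃ j, x (Fin.castLE hm.le j) = t then 0 else p t)
        / (1 - ∑ j, p (x (Fin.castLE hm.le j))) from funext heq]
  exact hres

include hp hppos hK2 hker in
lemma pdraft_vanish {m : ℕ} (hm : m < K) {x : Fin K → X} (hx : PrefInj m x)
    {t : X} (ht : ∃ i : Fin K, (i : ℕ) < m ∧ x i = t) :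
    pdraft ⟨m, hm⟩ (fun j => x (Fin.castLE hm.le j)) t = 0 := by
  rw [hker ⟨m, hm⟩ (fun j => x (Fin.castLE hm.le j)) (prefInj_inj hm hx) t]
  obtain ⟨i, hi, hxi⟩ := ht
  have hex : ∃ j : Fin m, x (Fin.castLE hm.le j) = t := by
    refine ⟨⟨(i : ℕ), hi⟩, ?_⟩
    have : Fin.castLE hm.le ⟨(i : ℕ), hi⟩ = i := Fin.ext rfl
    rw [this, hxi]
  rw [if_pos hex, zero_div]

include hp hppos hK2 hker in
lemma tail_norm : ∀ n m, m + n = K → ∀ x : Fin K → X, PrefInj m x →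
    ∑ y ∈ pinSet K m x, Wfun K pdraft m y = 1 := by
  intro n
  induction n with
  | zero =>
    intro m hmn x _
    have hmK : m = K := by omega
    subst hmK
    rw [pinSet_top, Finset.sum_singleton, Wfun_top]
  | succ n ih =>
    intro m hmn x hx
    have hm : m < K := by omega
    have hPdist := pdraft_probDist p hp hppos K hK2 pdraft hker hm hx
    rw [← Finset.sum_fiberwise (pinSet K m x) (fun y => y ⟨m, hm⟩)
      (fun y => Wfun K pdraft m y)]
    have hfiber : ∀ t, (∑ y ∈ Finset.filter (fun y => y ⟨m, hm⟩ = t) (pinSet K m x),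
        Wfun K pdraft m y) = pdraft ⟨m, hm⟩ (fun j => x (Fin.castLE hm.le j)) t := by
      intro t
      rw [pinSet_fiber hm]
      have hyW : ∀ y ∈ pinSet K (m+1) (Function.update x ⟨m, hm⟩ t),
          Wfun K pdraft m y
            = pdraft ⟨m, hm⟩ (fun j => x (Fin.castLE hm.le j)) t * Wfun K pdraft (m+1) y := by
        intro y hy
        simp only [pinSet, Finset.mem_filter, Finset.mem_univ, true_and] at hy
        have hyx : ∀ i : Fin K, (i : ℕ) < m → y i = x i := by
          intro i hi
          have h1 := hy i (by omega)
          rwa [Function.update_of_ne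
            (fun hc => absurd (congrArg Fin.val hc) (by simp; omega))] at h1
        have hym : y ⟨m, hm⟩ = t := by
          have h1 := hy ⟨m, hm⟩ (by simp)
          rwa [Function.update_self] at h1
        rw [Wfun_step hm]
        have h1 : (fun j : Fin m => y (Fin.castLE hm.le j))
            = (fun j => x (Fin.castLE hm.le j)) := by
          funext j
          exact hyx (Fin.castLE hm.le j) (by simpa using j.isLt)
        rw [h1, hym]
      rw [Finset.sum_congr rfl hyW, ← Finset.mul_sum]
      by_cases hPt : pdraft ⟨m, hm⟩ (fun j => x (Fin.castLE hm.le j)) t = 0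
      · rw [hPt, zero_mul]
      · have hno : ∀ i : Fin K, (i : ℕ) < m → x i ≠ t := by
          intro i hi hc
          exact hPt (pdraft_vanish p hp hppos K hK2 pdraft hker hm hx ⟨i, hi, hc⟩)
        rw [ih (m+1) (by omega) _ (prefInj_update hm hx hno), mul_one]
    rw [Finset.sum_congr rfl (fun t _ => hfiber t)]
    exact hPdist.2

end Main
section Main2
variable {X : Type*} [Fintype X] (p : X → ℝ) (hp : IsProbDist p) (hppos : ∀ x, 0 < p x)
  (K : ℕ) (hK2 : K ≤ Fintype.card X)
  (pdraft : (k : Fin K) → (Fin (k : ℕ) → X) → X → ℝ)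
  (hker : ∀ (k : Fin K) (h : Fin (k : ℕ) → X), Function.Injective h →
      ∀ x, pdraft k h x = (if ∃ j, h j = x then 0 else p x) / (1 - ∑ j, p (h j)))
  (d : X → ℝ) (hd : IsProbDist d) (q : X → ℝ) (hq : IsProbDist q) (z : X)

include hp hppos hK2 hker hd hq in
lemma main_ind : ∀ n m, m + n = K → ∀ x : Fin K → X, PrefInj m x →
    ∑ y ∈ pinSet K m x, Wfun K pdraft m y * Bfun K q pdraft d z m y
      = Qres K q pdraft d m x z := by
  intro n
  induction n with
  | zero =>
    intro m hmn x _
    have hmK : m = K := by omega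
    subst hmK
    rw [pinSet_top, Finset.sum_singleton, Wfun_top, Bfun_top, one_mul]
  | succ n ih =>
    intro m hmn x hx
    have hm : m < K := by omega
    have hPdist := pdraft_probDist p hp hppos K hK2 pdraft hker hm hx
    have hQdist := isProbDist_Qres K q hq pdraft d hd m x
    rw [← Finset.sum_fiberwise (pinSet K m x) (fun y => y ⟨m, hm⟩)
      (fun y => Wfun K pdraft m y * Bfun K q pdraft d z m y)]
    have hfiber : ∀ t, (∑ y ∈ Finset.filter (fun y => y ⟨m, hm⟩ = t) (pinSet K m x),
        Wfun K pdraft m y * Bfun K q pdraft d z m y)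
        = pdraft ⟨m, hm⟩ (fun j => x (Fin.castLE hm.le j)) t
          * (accProb (pdraft ⟨m, hm⟩ (fun j => x (Fin.castLE hm.le j)) t)
              (Qres K q pdraft d m x t) * (if t = z then 1 else 0)
            + (1 - accProb (pdraft ⟨m, hm⟩ (fun j => x (Fin.castLE hm.le j)) t)
              (Qres K q pdraft d m x t))
              * normOr d (fun s => max 0 (Qres K q pdraft d m x s
                  - pdraft ⟨m, hm⟩ (fun j => x (Fin.castLE hm.le j)) s)) z) := by
      intro t
      rw [pinSet_fiber hm]
      have key : ∀ y ∈ pinSet K (m+1) (Function.update x ⟨m, hm⟩ t),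
          Wfun K pdraft m y * Bfun K q pdraft d z m y
            = pdraft ⟨m, hm⟩ (fun j => x (Fin.castLE hm.le j)) t
              * (accProb (pdraft ⟨m, hm⟩ (fun j => x (Fin.castLE hm.le j)) t)
                  (Qres K q pdraft d m x t) * (if t = z then 1 else 0)
                  * Wfun K pdraft (m+1) y
                + (1 - accProb (pdraft ⟨m, hm⟩ (fun j => x (Fin.castLE hm.le j)) t)
                  (Qres K q pdraft d m x t))
                  * (Wfun K pdraft (m+1) y * Bfun K q pdraft d z (m+1) y)) := by
        intro y hy
        simp only [pinSet, Finset.mem_filter, Finset.mem_univ, true_and] at hy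
        have hyx : ∀ i : Fin K, (i : ℕ) < m → y i = x i := by
          intro i hi
          have h1 := hy i (by omega)
          rwa [Function.update_of_ne
            (fun hc => absurd (congrArg Fin.val hc) (by simp; omega))] at h1
        have hym : y ⟨m, hm⟩ = t := by
          have h1 := hy ⟨m, hm⟩ (by simp)
          rwa [Function.update_self] at h1
        have h1 : (fun j : Fin m => y (Fin.castLE hm.le j))
            = (fun j => x (Fin.castLE hm.le j)) := by
          funext j
          exact hyx (Fin.castLE hm.le j) (by simpa using j.isLt)
        have hθ : thetaN K q pdraft d m y
            = accProb (pdraft ⟨m, hm⟩ (fun j => x (Fin.castLE hm.le j)) t)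
              (Qres K q pdraft d m x t) := by
          unfold thetaN
          rw [dif_pos hm, h1, hym, Qres_congr K q pdraft d m y x hyx]
        rw [Bfun_step q pdraft d z hm y, Wfun_step hm pdraft y, hθ, h1, hym]
        ring
      rw [Finset.sum_congr rfl key, ← Finset.mul_sum]
      by_cases hPt : pdraft ⟨m, hm⟩ (fun j => x (Fin.castLE hm.le j)) t = 0
      · rw [hPt, zero_mul, zero_mul]
      · have hno : ∀ i : Fin K, (i : ℕ) < m → x i ≠ t := by
          intro i hi hc
          exact hPt (pdraft_vanish p hp hppos K hK2 pdraft hker hm hx ⟨i, hi, hc⟩)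
        have hx' := prefInj_update hm hx hno
        congr 1
        rw [Finset.sum_add_distrib, ← Finset.mul_sum, ← Finset.mul_sum,
          tail_norm p hp hppos K hK2 pdraft hker n (m+1) (by omega) _ hx',
          ih (m+1) (by omega) _ hx']
        have hq' : Qres K q pdraft d (m+1) (Function.update x ⟨m, hm⟩ t) z
            = normOr d (fun s => max 0 (Qres K q pdraft d m x s
                - pdraft ⟨m, hm⟩ (fun j => x (Fin.castLE hm.le j)) s)) z := by
          simp only [Qres]
          rw [dif_pos hm]
          have e1 : (fun j : Fin m => Function.update x ⟨m, hm⟩ t (Fin.castLE hm.le j))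
              = fun j => x (Fin.castLE hm.le j) := by
            funext j
            refine Function.update_of_ne ?_ t x
            intro hc
            have h2 : ((Fin.castLE hm.le j : Fin K) : ℕ) = m := congrArg Fin.val hc
            simp only [Fin.coe_castLE] at h2
            exact absurd h2 (Nat.ne_of_lt j.isLt)
          have e2 : Qres K q pdraft d m (Function.update x ⟨m, hm⟩ t)
              = Qres K q pdraft d m x := by
            apply Qres_congr
            intro i hi
            refine Function.update_of_ne ?_ t x
            intro hc
            have h2 : (i : ℕ) = m := congrArg Fin.val hc
            omega
          rw [e1, e2]
        rw [hq', mul_one]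
    rw [Finset.sum_congr rfl (fun t _ => hfiber t)]
    exact round_identity (pdraft ⟨m, hm⟩ (fun j => x (Fin.castLE hm.le j)))
      (Qres K q pdraft d m x) d hPdist hQdist z

end Main2
section Expl
variable {X : Type*} [Fintype X]

lemma Bfun_expl (K : ℕ) (q : X → ℝ) (pdraft : (k : Fin K) → (Fin (k : ℕ) → X) → X → ℝ)
    (d : X → ℝ) (z : X) : ∀ n m, m + n = K → ∀ x : Fin K → X,
    Bfun K q pdraft d z m x =
      (∑ k : Fin K, if m ≤ (k : ℕ) then
          (∏ j ∈ Finset.Ico m (k : ℕ), (1 - thetaN K q pdraft d j x)) *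
            thetaN K q pdraft d (k : ℕ) x * (if x k = z then 1 else 0) else 0)
      + (∏ j ∈ Finset.Ico m K, (1 - thetaN K q pdraft d j x)) * Qres K q pdraft d K x z := by
  intro n
  induction n with
  | zero =>
    intro m hmn x
    have hmK : m = K := by omega
    subst hmK
    rw [Bfun_top, Finset.sum_eq_zero (fun k _ => if_neg (Nat.not_le.mpr k.isLt)),
      Finset.Ico_self, Finset.prod_empty, one_mul, zero_add]
  | succ n ih =>
    intro m hmn x
    have hm : m < K := by omega
    set θ : ℕ → ℝ := fun j => thetaN K q pdraft d j x with hθ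
    have hsplit : ∀ k : Fin K,
        (if m ≤ (k : ℕ) then
          (∏ j ∈ Finset.Ico m (k : ℕ), (1 - θ j)) * θ (k : ℕ) * (if x k = z then 1 else 0)
         else 0)
        = (if k = ⟨m, hm⟩ then θ m * (if x ⟨m, hm⟩ = z then 1 else 0) else 0)
          + (1 - θ m) * (if m + 1 ≤ (k : ℕ) then
              (∏ j ∈ Finset.Ico (m+1) (k : ℕ), (1 - θ j)) * θ (k : ℕ)
                * (if x k = z then 1 else 0)
             else 0) := by
      intro k
      by_cases hkm : k = ⟨m, hm⟩
      · subst hkm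
        have hne : ¬ m + 1 ≤ ((⟨m, hm⟩ : Fin K) : ℕ) := by
          simp
        rw [if_pos (le_refl m), if_pos rfl, if_neg hne, mul_zero, add_zero,
          Finset.Ico_self, Finset.prod_empty, one_mul]
      · have hkm' : (k : ℕ) ≠ m := fun hc => hkm (Fin.ext hc)
        rw [if_neg hkm, zero_add]
        by_cases hle : m ≤ (k : ℕ)
        · have hlt : m < (k : ℕ) := by omega
          have h2 : m + 1 ≤ (k : ℕ) := by omega
          rw [if_pos hle, if_pos h2, Finset.prod_eq_prod_Ico_succ_bot hlt]
          ring
        · have h2 : ¬ m + 1 ≤ (k : ℕ) := by omega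
          rw [if_neg hle, if_neg h2, mul_zero]
    rw [Finset.sum_congr rfl (fun k _ => hsplit k), Finset.sum_add_distrib,
      Finset.sum_ite_eq' Finset.univ (⟨m, hm⟩ : Fin K), if_pos (Finset.mem_univ _),
      ← Finset.mul_sum, Finset.prod_eq_prod_Ico_succ_bot hm, Bfun_step q pdraft d z hm,
      ih (m+1) (by omega) x]
    ring
end Expl

/-- **Recursive rejection sampling with draft tokens sampled without replacement recovers the
target distribution.**  The draft kernels agree with the sampling-without-replacement kernels
derived from the full-support distribution `p` on injective histories (and are arbitrary on
histories with repeated tokens, which occur with probability 0). -/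
theorem rrs_swor_recovers_target {X : Type*} [Fintype X] [Nonempty X]
    (p : X → ℝ) (hp : IsProbDist p) (hppos : ∀ x, 0 < p x)
    (K : ℕ) (hK1 : 1 ≤ K) (hK2 : K ≤ Fintype.card X)
    (pdraft : (k : Fin K) → (Fin (k : ℕ) → X) → X → ℝ)
    (hker : ∀ (k : Fin K) (h : Fin (k : ℕ) → X), Function.Injective h →
      ∀ x, pdraft k h x = (if ∃ j, h j = x then 0 else p x) / (1 - ∑ j, p (h j)))
    (d : X → ℝ) (hd : IsProbDist d)
    (q : X → ℝ) (hq : IsProbDist q) (z : X) :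
    rrsLaw K q pdraft d z = q z := by
  have hbr : ∀ x : Fin K → X,
      ((∑ k : Fin K,
        (∏ j ∈ Finset.range (k : ℕ), (1 - thetaN K q pdraft d j x)) *
          thetaN K q pdraft d (k : ℕ) x * (if x k = z then 1 else 0)) +
      (∏ j ∈ Finset.range K, (1 - thetaN K q pdraft d j x)) *
        Qres K q pdraft d K x z) = Bfun K q pdraft d z 0 x := by
    intro x
    rw [Bfun_expl K q pdraft d z K 0 (by omega) x]
    congr 1
    · apply Finset.sum_congr rfl
      intro k _
      rw [if_pos (Nat.zero_le _), Finset.range_eq_Ico]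
    · rw [Finset.range_eq_Ico]
  have hx0 : ∀ x : Fin K → X, trajProb K pdraft x *
      ((∑ k : Fin K,
        (∏ j ∈ Finset.range (k : ℕ), (1 - thetaN K q pdraft d j x)) *
          thetaN K q pdraft d (k : ℕ) x * (if x k = z then 1 else 0)) +
      (∏ j ∈ Finset.range K, (1 - thetaN K q pdraft d j x)) *
        Qres K q pdraft d K x z)
      = Wfun K pdraft 0 x * Bfun K q pdraft d z 0 x := by
    intro x
    rw [hbr x, Wfun_zero]
  rw [rrsLaw, Finset.sum_congr rfl (fun x _ => hx0 x)]
  have hmain := main_ind p hp hppos K hK2 pdraft hker d hd q hq z K 0 (by omega)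
    (fun _ => Classical.arbitrary X) (prefInj_zero _)
  rw [pinSet_zero] at hmain
  rw [hmain]
  rfl
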